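/- Let N ≥ 1 be a natural number and α the unique natural number with 3^α ≤ N < 3^{α+1}. If (d_1,...,d_n) is a sequence of integers with each d_j ≥ 3 and ∏_{j=1}^n ∏_{i=1,\ d_j ∤ i}^{d_j - 1} (2^i - 1) ≤ N, then ∏_{j=1}^n φ(d_j) ≤ 2^α, where φ is Euler's totient function. -/

import Mathlib

lemma prod_two_pow_sub_one_ge (m : ℕ) (hm : 2 ≤ m) :
    3 ^ (m - 1) ≤ ∏ i ∈ Finset.Icc 1 m, (2 ^ i - 1) := by
  induction m with
  | zero => omega
  | succ k ih =>
    rcases Nat.lt_or_ge k 2 with hk | hk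
    · interval_cases k
      · omega
      · decide
    · rw [Finset.prod_Icc_succ_top (by omega)]
      have h1 := ih hk
      have h2 : 3 ≤ 2 ^ (k + 1) - 1 := by
        have : 2 ^ 2 ≤ 2 ^ (k + 1) := Nat.pow_le_pow_right (by norm_num) (by omega)
        omega
      calc 3 ^ (k + 1 - 1) = 3 ^ (k - 1) * 3 := by
            rw [← pow_succ]; congr 1; omega
        _ ≤ (∏ i ∈ Finset.Icc 1 k, (2 ^ i - 1)) * (2 ^ (k + 1) - 1) :=
            Nat.mul_le_mul h1 h2

/-- Combinatorial core of the effective Prasad–Rapinchuk bound: if `3^α ≤ N < 3^{α+1}`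
and `(d_1, …, d_n)` are integers `≥ 3` whose lambda factors
`λ_j = ∏_{1 ≤ i ≤ d_j - 1, d_j ∤ i} (2^i - 1)` have product at most `N`, then
`∏_j φ(d_j) ≤ 2^α`. -/
theorem totient_prod_le_of_lambda_prod_le (N α n : ℕ) (hN : 1 ≤ N)
    (hα₁ : 3 ^ α ≤ N) (hα₂ : N < 3 ^ (α + 1))
    (d : Fin n → ℕ) (hd : ∀ j, 3 ≤ d j)
    (hprod : (∏ j, ∏ i ∈ (Finset.Icc 1 (d j - 1)).filter (fun i => ¬ d j ∣ i), (2 ^ i - 1)) ≤ N) :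
    (∏ j, Nat.totient (d j)) ≤ 2 ^ α := by
  -- the filter condition is vacuous
  have hfilt : ∀ j, (Finset.Icc 1 (d j - 1)).filter (fun i => ¬ d j ∣ i)
      = Finset.Icc 1 (d j - 1) := by
    intro j
    apply Finset.filter_true_of_mem
    intro i hi hdvd
    rw [Finset.mem_Icc] at hi
    have := Nat.le_of_dvd (by omega) hdvd
    omega
  -- per-factor bound
  have key : ∀ j, 3 ^ (Nat.totient (d j) - 1)
      ≤ ∏ i ∈ (Finset.Icc 1 (d j - 1)).filter (fun i => ¬ d j ∣ i), (2 ^ i - 1) := by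
    intro j
    rw [hfilt j]
    have h1 : 3 ^ (d j - 1 - 1) ≤ ∏ i ∈ Finset.Icc 1 (d j - 1), (2 ^ i - 1) :=
      prod_two_pow_sub_one_ge _ (by have := hd j; omega)
    refine le_trans (Nat.pow_le_pow_right (by norm_num) ?_) h1
    have := Nat.totient_lt (d j) (by have := hd j; omega)
    omega
  -- sum of exponents is at most α
  have hsum : 3 ^ (∑ j, (Nat.totient (d j) - 1)) ≤ N := by
    rw [← Finset.prod_pow_eq_pow_sum]
    exact le_trans (Finset.prod_le_prod (fun j _ => Nat.zero_le _) (fun j _ => key j)) hprod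
  have hle : (∑ j, (Nat.totient (d j) - 1)) ≤ α := by
    by_contra h
    push_neg at h
    have : 3 ^ (α + 1) ≤ 3 ^ (∑ j, (Nat.totient (d j) - 1)) :=
      Nat.pow_le_pow_right (by norm_num) h
    omega
  calc (∏ j, Nat.totient (d j)) ≤ ∏ j, 2 ^ (Nat.totient (d j) - 1) := by
        apply Finset.prod_le_prod (fun j _ => Nat.zero_le _)
        intro j _
        have hpos : 0 < Nat.totient (d j) := Nat.totient_pos.mpr (by have := hd j; omega)
        have := Nat.lt_two_pow_self (n := Nat.totient (d j) - 1)
        omega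
    _ = 2 ^ (∑ j, (Nat.totient (d j) - 1)) := Finset.prod_pow_eq_pow_sum ..
    _ ≤ 2 ^ α := Nat.pow_le_pow_right (by norm_num) hle
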